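/- Suppose F: ℝ → ℂ is measurable with |F(x)| ≤ C·η(x) for x ≥ 0, where η ≥ 0 is nonincreasing with ∫_0^∞ η < ∞, and suppose H ∈ L^∞([0,∞)) ∩ C([0,∞)) solves the integral equation H(x) − ∫_0^∞ H(y)F(x+y) dy = G(x) on [0,∞), where |G(x)| ≤ C̃·η(x). If there exists N > 0 with D(N) := C·∫_N^∞ η(y) dy < 1, then there exists a constant Ĉ > 0 such that |H(x)| ≤ Ĉ·η(x) for all x ≥ 0. -/

import Mathlib

open MeasureTheory

/-- A priori estimate: a bounded continuous solution of the integral equation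
`H(x) - ∫_0^∞ H(y)F(x+y) dy = G(x)` with `|F| ≤ Cη`, `|G| ≤ C̃η` and a
smallness condition at infinity satisfies `|H(x)| ≤ Ĉ η(x)`. -/
theorem apriori_estimate_integral_equation
    (F H G : ℝ → ℂ) (η : ℝ → ℝ) (C Ctil N : ℝ)
    (hC : 0 < C) (hCtil : 0 < Ctil) (hN : 0 < N)
    (hnn : ∀ y : ℝ, 0 ≤ y → 0 ≤ η y)
    (hmono : ∀ x y : ℝ, 0 ≤ x → x ≤ y → η y ≤ η x)
    (hηint : IntegrableOn η (Set.Ici 0))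
    (hF : Measurable F)
    (hFb : ∀ x : ℝ, 0 ≤ x → ‖F x‖ ≤ C * η x)
    (hHcont : ContinuousOn H (Set.Ici 0))
    (hHbdd : ∃ M : ℝ, ∀ x : ℝ, 0 ≤ x → ‖H x‖ ≤ M)
    (heq : ∀ x : ℝ, 0 ≤ x →
      H x - (∫ y in Set.Ioi (0:ℝ), H y * F (x + y)) = G x)
    (hGb : ∀ x : ℝ, 0 ≤ x → ‖G x‖ ≤ Ctil * η x)
    (hD : C * (∫ y in Set.Ioi N, η y) < 1) :
    ∃ Chat : ℝ, 0 < Chat ∧ ∀ x : ℝ, 0 ≤ x → ‖H x‖ ≤ Chat * η x := by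
  obtain ⟨M₀, hM₀⟩ := hHbdd
  set M : ℝ := max M₀ 0 with hMdef
  have hMnn : 0 ≤ M := le_max_right _ _
  have hMb : ∀ x : ℝ, 0 ≤ x → ‖H x‖ ≤ M :=
    fun x hx => (hM₀ x hx).trans (le_max_left _ _)
  set D : ℝ := C * ∫ y in Set.Ioi N, η y with hDdef
  have hintN : IntegrableOn η (Set.Ioi N) :=
    hηint.mono_set (fun y hy => le_of_lt (lt_of_le_of_lt hN.le hy))
  have hDnn : 0 ≤ D := by
    apply mul_nonneg hC.le
    apply setIntegral_nonneg measurableSet_Ioi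
    intro y hy
    exact hnn y (hN.le.trans (le_of_lt hy))
  have hDlt : D < 1 := hD
  have h1D : 0 < 1 - D := by linarith
  set K0 : ℝ := Ctil + N * M * C with hK0def
  have hK0pos : 0 < K0 := by
    have : 0 ≤ N * M * C := by positivity
    linarith
  set Chat : ℝ := K0 / (1 - D) with hChatdef
  have hChatpos : 0 < Chat := div_pos hK0pos h1D
  refine ⟨Chat, hChatpos, ?_⟩
  -- measurability of H on (0,∞)
  have hHm : AEMeasurable H (volume.restrict (Set.Ioi (0:ℝ))) := by
    have h1 : AEMeasurable H (volume.restrict (Set.Ici (0:ℝ))) :=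
      hHcont.aemeasurable measurableSet_Ici
    exact h1.mono_measure (Measure.restrict_mono Set.Ioi_subset_Ici_self le_rfl)
  -- the key recursive estimate
  have key : ∀ a b : ℝ, 0 ≤ a → 0 ≤ b →
      (∀ y : ℝ, 0 ≤ y → ‖H y‖ ≤ a * η y + b) →
      ∀ x : ℝ, 0 ≤ x → ‖H x‖ ≤ (K0 + D * a) * η x + D * b := by
    intro a b ha hb hab x hx
    have hηx : 0 ≤ η x := hnn x hx
    set φ : ℝ → ℝ := fun y => ‖H y‖ * ‖F (x + y)‖ with hφdef
    have hφm : AEStronglyMeasurable φ (volume.restrict (Set.Ioi (0:ℝ))) := by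
      exact (hHm.norm.mul ((hF.comp (measurable_const_add x)).norm.aemeasurable)).aestronglyMeasurable
    have hφnn : ∀ y : ℝ, 0 ≤ φ y := fun y => mul_nonneg (norm_nonneg _) (norm_nonneg _)
    have hφbd : ∀ y : ℝ, 0 < y → φ y ≤ M * (C * η y) := by
      intro y hy
      have h1 : ‖H y‖ ≤ M := hMb y hy.le
      have h2 : ‖F (x + y)‖ ≤ C * η (x + y) := hFb _ (by linarith)
      have h3 : η (x + y) ≤ η y := hmono y (x + y) hy.le (by linarith)
      calc φ y ≤ M * (C * η (x + y)) :=
            mul_le_mul h1 h2 (norm_nonneg _) hMnn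
        _ ≤ M * (C * η y) := by gcongr
    have hφint : IntegrableOn φ (Set.Ioi (0:ℝ)) := by
      apply Integrable.mono' ((hηint.mono_set Set.Ioi_subset_Ici_self).const_mul (M * C))
      · exact hφm
      · filter_upwards [ae_restrict_mem measurableSet_Ioi] with y hy
        rw [Real.norm_eq_abs, abs_of_nonneg (hφnn y)]
        calc φ y ≤ M * (C * η y) := hφbd y hy
          _ = M * C * η y := by ring
    -- split the integral
    have hsub1 : Set.Ioc (0:ℝ) N ⊆ Set.Ioi 0 := Set.Ioc_subset_Ioi_self
    have hsub2 : Set.Ioi N ⊆ Set.Ioi (0:ℝ) := fun y hy => lt_of_lt_of_le hN (le_of_lt hy)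
    have hsplit : (∫ y in Set.Ioi (0:ℝ), φ y)
        = (∫ y in Set.Ioc (0:ℝ) N, φ y) + ∫ y in Set.Ioi N, φ y := by
      rw [← Set.Ioc_union_Ioi_eq_Ioi hN.le]
      exact setIntegral_union (Set.Ioc_disjoint_Ioi le_rfl) measurableSet_Ioi
        (hφint.mono_set hsub1) (hφint.mono_set hsub2)
    -- estimate the first piece
    have hpiece1 : (∫ y in Set.Ioc (0:ℝ) N, φ y) ≤ N * M * C * η x := by
      have hmono1 : ∀ y ∈ Set.Ioc (0:ℝ) N, φ y ≤ M * (C * η x) := by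
        intro y hy
        have hy0 : 0 < y := hy.1
        have h1 : ‖H y‖ ≤ M := hMb y hy0.le
        have h2 : ‖F (x + y)‖ ≤ C * η (x + y) := hFb _ (by linarith)
        have h3 : η (x + y) ≤ η x := hmono x (x + y) hx (by linarith)
        calc φ y ≤ M * (C * η (x + y)) :=
              mul_le_mul h1 h2 (norm_nonneg _) hMnn
          _ ≤ M * (C * η x) := by gcongr
      calc (∫ y in Set.Ioc (0:ℝ) N, φ y)
          ≤ ∫ _y in Set.Ioc (0:ℝ) N, M * (C * η x) :=
            setIntegral_mono_on (hφint.mono_set hsub1)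
              ((integrableOn_const_iff).mpr (Or.inr measure_Ioc_lt_top)) measurableSet_Ioc hmono1
        _ = (volume (Set.Ioc (0:ℝ) N)).toReal * (M * (C * η x)) := by
            rw [setIntegral_const]; rfl
        _ = N * M * C * η x := by
            rw [Real.volume_Ioc, ENNReal.toReal_ofReal (by linarith)]
            ring
    -- estimate the second piece
    have hpiece2 : (∫ y in Set.Ioi N, φ y) ≤ (a * η x + b) * D := by
      have hmono2 : ∀ y ∈ Set.Ioi N, φ y ≤ C * (a * η x + b) * η y := by
        intro y hy
        have hy0 : 0 < y := lt_trans hN hy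
        have hηy : 0 ≤ η y := hnn y hy0.le
        have h1 : ‖H y‖ ≤ a * η y + b := hab y hy0.le
        have h2 : ‖F (x + y)‖ ≤ C * η (x + y) := hFb _ (by linarith)
        have h3 : η (x + y) ≤ η x := hmono x (x + y) hx (by linarith)
        have h4 : η (x + y) ≤ η y := hmono y (x + y) hy0.le (by linarith)
        have hηxy : 0 ≤ η (x + y) := hnn _ (by linarith)
        have : φ y ≤ (a * η y + b) * (C * η (x + y)) :=
          mul_le_mul h1 h2 (norm_nonneg _) (by positivity)
        calc φ y ≤ (a * η y + b) * (C * η (x + y)) := this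
          _ = a * η y * (C * η (x + y)) + b * (C * η (x + y)) := by ring
          _ ≤ a * η y * (C * η x) + b * (C * η y) := by
              have e1 : a * η y * (C * η (x + y)) ≤ a * η y * (C * η x) := by
                have h0 : 0 ≤ a * η y := mul_nonneg ha hηy
                gcongr
              have e2 : b * (C * η (x + y)) ≤ b * (C * η y) := by gcongr
              linarith
          _ = C * (a * η x + b) * η y := by ring
      calc (∫ y in Set.Ioi N, φ y)
          ≤ ∫ y in Set.Ioi N, C * (a * η x + b) * η y :=
            setIntegral_mono_on (hφint.mono_set hsub2)
              (hintN.const_mul _) measurableSet_Ioi hmono2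
        _ = C * (a * η x + b) * ∫ y in Set.Ioi N, η y := by
            rw [integral_const_mul]
        _ = (a * η x + b) * D := by rw [hDdef]; ring
    -- put things together via the equation
    have hHx : H x = G x + ∫ y in Set.Ioi (0:ℝ), H y * F (x + y) := by
      have := heq x hx
      linear_combination this
    have hInorm : ‖∫ y in Set.Ioi (0:ℝ), H y * F (x + y)‖ ≤ ∫ y in Set.Ioi (0:ℝ), φ y := by
      calc ‖∫ y in Set.Ioi (0:ℝ), H y * F (x + y)‖
          ≤ ∫ y in Set.Ioi (0:ℝ), ‖H y * F (x + y)‖ := norm_integral_le_integral_norm _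
        _ = ∫ y in Set.Ioi (0:ℝ), φ y := by
            simp only [hφdef, norm_mul]
    calc ‖H x‖ = ‖G x + ∫ y in Set.Ioi (0:ℝ), H y * F (x + y)‖ := by rw [← hHx]
      _ ≤ ‖G x‖ + ‖∫ y in Set.Ioi (0:ℝ), H y * F (x + y)‖ := norm_add_le _ _
      _ ≤ Ctil * η x + ∫ y in Set.Ioi (0:ℝ), φ y := add_le_add (hGb x hx) hInorm
      _ = Ctil * η x + ((∫ y in Set.Ioc (0:ℝ) N, φ y) + ∫ y in Set.Ioi N, φ y) := by
          rw [hsplit]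
      _ ≤ Ctil * η x + (N * M * C * η x + (a * η x + b) * D) :=
          add_le_add_right (add_le_add hpiece1 hpiece2) _
      _ = (K0 + D * a) * η x + D * b := by rw [hK0def]; ring
  -- iterate the key estimate
  have hfix : K0 + D * Chat = Chat := by
    rw [hChatdef]
    field_simp
    ring
  have iter : ∀ n : ℕ, ∀ x : ℝ, 0 ≤ x → ‖H x‖ ≤ Chat * η x + D ^ n * M := by
    intro n
    induction n with
    | zero =>
      intro x hx
      have h0 : 0 ≤ Chat * η x := mul_nonneg hChatpos.le (hnn x hx)
      simp only [pow_zero, one_mul]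
      linarith [hMb x hx]
    | succ n ih =>
      intro x hx
      have h := key Chat (D ^ n * M) hChatpos.le (by positivity) ih x hx
      calc ‖H x‖ ≤ (K0 + D * Chat) * η x + D * (D ^ n * M) := h
        _ = Chat * η x + D ^ (n + 1) * M := by rw [hfix]; ring
  -- pass to the limit
  intro x hx
  have hlim : Filter.Tendsto (fun n : ℕ => Chat * η x + D ^ n * M) Filter.atTop
      (nhds (Chat * η x + 0 * M)) := by
    apply Filter.Tendsto.add tendsto_const_nhds
    exact (tendsto_pow_atTop_nhds_zero_of_lt_one hDnn hDlt).mul_const M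
  have : ‖H x‖ ≤ Chat * η x + 0 * M :=
    le_of_tendsto_of_tendsto' tendsto_const_nhds hlim (fun n => iter n x hx)
  linarith
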